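/- Let α₀ > β₀ and β₁ > α₁ be real numbers with β₀ > α₁ (so a's payoffs do not lie in the convex hull of b's payoffs). Then there exists a strictly increasing concave function φ : ℝ → ℝ such that (φ(β₁) − φ(α₁))/(β₁ − α₁) > (φ(α₀) − φ(β₀))/(α₀ − β₀). -/
import Mathlib


theorem stmt_1 (α₀ α₁ β₀ β₁ : ℝ) (h0 : α₀ > β₀) (h1 : β₁ > α₁)
    (hfail : β₀ > α₁) :
    ∃ φ : ℝ → ℝ, StrictMono φ ∧ ConcaveOn ℝ Set.univ φ ∧
      (φ β₁ - φ α₁) / (β₁ - α₁) > (φ α₀ - φ β₀) / (α₀ - β₀) := by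
  refine ⟨fun y => min y ((y + β₀) / 2), ?_, ?_, ?_⟩
  · intro x y hxy
    exact lt_min (lt_of_le_of_lt (min_le_left _ _) hxy)
      (lt_of_le_of_lt (min_le_right _ _) (by linarith))
  · constructor
    · exact convex_univ
    · intro x _ y _ a b ha hb hab
      simp only [smul_eq_mul]
      refine le_min ?_ ?_
      · calc a * min x ((x + β₀) / 2) + b * min y ((y + β₀) / 2)
            ≤ a * x + b * y := by
              gcongr <;> [exact min_le_left _ _; exact min_le_left _ _]
          _ = a • x + b • y := by simp
      · calc a * min x ((x + β₀) / 2) + b * min y ((y + β₀) / 2)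
            ≤ a * ((x + β₀) / 2) + b * ((y + β₀) / 2) := by
              gcongr <;> [exact min_le_right _ _; exact min_le_right _ _]
          _ = (a • x + b • y + β₀) / 2 := by
              simp only [smul_eq_mul]; linear_combination (β₀ / 2) * hab
  · have hφα₀ : min α₀ ((α₀ + β₀) / 2) = (α₀ + β₀) / 2 := min_eq_right (by linarith)
    have hφβ₀ : min β₀ ((β₀ + β₀) / 2) = β₀ := by
      rw [min_eq_left]; linarith
    have hφα₁ : min α₁ ((α₁ + β₀) / 2) = α₁ := min_eq_left (by linarith)
    have hd0 : α₀ - β₀ > 0 := by linarith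
    have hd1 : β₁ - α₁ > 0 := by linarith
    have hrhs : ((α₀ + β₀) / 2 - β₀) / (α₀ - β₀) = 1 / 2 := by
      field_simp; ring
    simp only [hφα₀, hφβ₀, hφα₁, hrhs]
    rcases le_or_gt β₁ β₀ with hc | hc
    · rw [min_eq_left (by linarith)]
      rw [gt_iff_lt, div_lt_div_iff₀ (by norm_num) hd1]
      linarith
    · rw [min_eq_right (by linarith)]
      rw [gt_iff_lt, div_lt_div_iff₀ (by norm_num) hd1]
      linarith
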